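/- Let I be a non-meager P-ideal on ω (containing all finite sets) and let D₀ and D₁ be two countable dense subsets of I. Then there exists x ∈ I such that: (i) for each d ∈ D₀ ∪ D₁, d ⊆* x; and (ii) for each i ∈ {0,1}, each d ∈ D_i, each n < ω and each function t : (n ∩ x) → 2, there exists e ∈ D_{1−i} such that d \ x = e \ x and the characteristic function of e restricted to n ∩ x equals t. -/

import Mathlib

open Set

/-- A point of the Cantor space `α → Bool`, viewed as a subset of `α`
(the identification of `2^ω` with `𝒫(ω)` via characteristic functions). -/
def toSet {α : Type*} (x : α → Bool) : Set α := {a | x a = true}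

/-- The copy of a family `F ⊆ 𝒫(α)` inside the Cantor space `α → Bool`. -/
def cantorCopy {α : Type*} (F : Set (Set α)) : Set (α → Bool) := toSet ⁻¹' F

/-- `F` is a filter on `α`: contains the whole set, not `∅`, closed under
finite intersections and supersets. -/
def IsFilterOn {α : Type*} (F : Set (Set α)) : Prop :=
  Set.univ ∈ F ∧ ∅ ∉ F ∧ (∀ A B : Set α, A ∈ F → B ∈ F → A ∩ B ∈ F) ∧
    ∀ A B : Set α, A ∈ F → A ⊆ B → B ∈ F

/-- `F` extends the Fréchet filter: every cofinite set belongs to `F`. -/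
def ExtendsFrechet {α : Type*} (F : Set (Set α)) : Prop :=
  ∀ A : Set α, Aᶜ.Finite → A ∈ F

/-- `F` is a P-filter: every countable subfamily has a pseudo-intersection in `F`. -/
def IsPFilterOn {α : Type*} (F : Set (Set α)) : Prop :=
  ∀ X : ℕ → Set α, (∀ n, X n ∈ F) → ∃ Y ∈ F, ∀ n, (Y \ X n).Finite

/-- `F` is non-meager as a subset of the Cantor space `α → Bool`. -/
def NonMeagerFamily {α : Type*} (F : Set (Set α)) : Prop :=
  ¬ IsMeagre (cantorCopy F)

/-- `I` is an ideal on `α`: contains `∅`, not the whole set, closed under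
finite unions and subsets. -/
def IsIdealOn {α : Type*} (I : Set (Set α)) : Prop :=
  ∅ ∈ I ∧ Set.univ ∉ I ∧ (∀ A B : Set α, A ∈ I → B ∈ I → A ∪ B ∈ I) ∧
    ∀ A B : Set α, A ∈ I → B ⊆ A → B ∈ I

/-- `I` contains all finite sets. -/
def ContainsFinites {α : Type*} (I : Set (Set α)) : Prop :=
  ∀ A : Set α, A.Finite → A ∈ I

/-- `I` is a P-ideal: every countable subfamily has a member of `I`
almost containing each of them. -/
def IsPIdealOn {α : Type*} (I : Set (Set α)) : Prop :=
  ∀ X : ℕ → Set α, (∀ n, X n ∈ I) → ∃ Y ∈ I, ∀ n, (X n \ Y).Finite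

/-- A topological space is countable dense homogeneous. -/
def CDH (X : Type*) [TopologicalSpace X] : Prop :=
  ∀ D E : Set X, D.Countable → Dense D → E.Countable → Dense E →
    ∃ h : X ≃ₜ X, h '' D = E

/-- `D` is a (set-theoretic) subfamily of `F` that is dense in `F` with respect to
the subspace topology `F` inherits from the Cantor space. -/
def DenseIn {α : Type*} (D F : Set (Set α)) : Prop :=
  D ⊆ F ∧ cantorCopy F ⊆ closure (cantorCopy D)

/-- Combinatorial lemma: for a non-meager P-ideal `I` and countable dense subsets
`D 0`, `D 1` of `I` there is `x ∈ I` such that (i) every `d ∈ D 0 ∪ D 1` is almost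
contained in `x`, and (ii) for each `i`, `d ∈ D i`, `n < ω` and `t : (n ∩ x) → 2`
there is `e ∈ D (1 - i)` with `d \ x = e \ x` and `χ(e)` agreeing with `t` on `n ∩ x`. -/
lemma myNowhereDense_isMeagre {X : Type*} [TopologicalSpace X] {s : Set X}
    (h : IsNowhereDense s) : IsMeagre s :=
  isMeagre_iff_countable_union_isNowhereDense.2
    ⟨{s}, by simpa, countable_singleton _, by simp⟩

lemma dense_approx {Dset I : Set (Set ℕ)} (hd : DenseIn Dset I) {w : Set ℕ} (hw : w ∈ I)
    (m : ℕ) : ∃ e ∈ Dset, ∀ p < m, (p ∈ e ↔ p ∈ w) := by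
  classical
  set f : ℕ → Bool := fun p => decide (p ∈ w) with hf
  have hfI : f ∈ cantorCopy I := by
    have : toSet f = w := by ext p; simp [toSet, hf]
    simpa [cantorCopy, this]
  have hcl := hd.2 hfI
  have hUeq : {g : ℕ → Bool | ∀ p < m, g p = f p} = Set.pi (Set.Iio m) (fun p => {f p}) := by
    ext g; simp [Set.mem_pi]
  have hU : IsOpen {g : ℕ → Bool | ∀ p < m, g p = f p} := by
    rw [hUeq]; exact isOpen_set_pi (finite_Iio m) (fun a _ => isOpen_discrete _)
  have hfU : f ∈ {g : ℕ → Bool | ∀ p < m, g p = f p} := fun p _ => rfl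
  obtain ⟨g, hgU, hgD⟩ := mem_closure_iff.1 hcl _ hU hfU
  refine ⟨toSet g, hgD, fun p hp => ?_⟩
  have := hgU p hp
  simp [toSet, this, hf]

lemma nonmeager_hits {I : Set (Set ℕ)} (hNM : NonMeagerFamily I)
    (l r : ℕ → ℕ) (hlr : ∀ k, l k < r k) (hrl : ∀ k, r k ≤ l (k + 1)) :
    ∃ x ∈ I, ∀ K, ∃ k ≥ K, Set.Ico (l k) (r k) ⊆ x := by
  by_contra hcon
  push_neg at hcon
  apply hNM
  have hmono : StrictMono l := strictMono_nat_of_lt_succ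
    (fun k => lt_of_lt_of_le (hlr k) (hrl k))
  set E : ℕ → Set (ℕ → Bool) :=
    fun m => {f | ∀ k, m ≤ k → ∃ j, l k ≤ j ∧ j < r k ∧ f j = false} with hE
  have hsub : cantorCopy I ⊆ ⋃ m, E m := by
    intro f hf
    obtain ⟨K, hK⟩ := hcon (toSet f) hf
    refine mem_iUnion.2 ⟨K, fun k hk => ?_⟩
    obtain ⟨j, hj1, hj2⟩ := Set.not_subset.1 (hK k hk)
    refine ⟨j, (mem_Ico.1 hj1).1, (mem_Ico.1 hj1).2, ?_⟩
    simpa [toSet] using hj2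
  have hclosed : ∀ m, IsClosed (E m) := by
    intro m
    have : E m = ⋂ k, ⋂ (_ : m ≤ k),
        ⋃ j ∈ Finset.Ico (l k) (r k), {f : ℕ → Bool | f j = false} := by
      ext f
      simp only [hE, mem_setOf_eq, mem_iInter, mem_iUnion, mem_setOf_eq, Finset.mem_Ico,
        exists_prop]
      constructor
      · rintro h k hk; obtain ⟨j, h1, h2, h3⟩ := h k hk; exact ⟨j, ⟨h1, h2⟩, h3⟩
      · rintro h k hk; obtain ⟨j, ⟨h1, h2⟩, h3⟩ := h k hk; exact ⟨j, h1, h2, h3⟩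
    rw [this]
    refine isClosed_iInter fun k => isClosed_iInter fun _ => isClosed_biUnion_finset ?_
    intro j _
    show IsClosed ((fun f : ℕ → Bool => f j) ⁻¹' {false})
    exact (isClosed_discrete {false}).preimage (continuous_apply j)
  have hint : ∀ m, interior (E m) = ∅ := by
    intro m
    rw [eq_empty_iff_forall_notMem]
    intro f hf
    obtain ⟨F, u, hu, hsubU⟩ := isOpen_pi_iff.1 isOpen_interior f hf
    classical
    set k := max m (F.sup id + 1) with hk
    have hlk : ∀ j ∈ F, j < l k := by
      intro j hj
      have h1 : j ≤ F.sup id := Finset.le_sup (f := id) hj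
      have h2 : F.sup id + 1 ≤ k := le_max_right _ _
      have h3 : k ≤ l k := hmono.le_apply
      omega
    set g : ℕ → Bool := fun p => if p ∈ F then f p else true with hg
    have hgU : g ∈ interior (E m) := by
      apply hsubU
      intro a ha
      have ha' : a ∈ F := ha
      have : g a = f a := by simp [hg, ha']
      rw [this]
      exact (hu a ha).2
    have hgE : g ∈ E m := interior_subset hgU
    obtain ⟨j, hj1, hj2, hj3⟩ := hgE k (le_max_left _ _)
    have hjF : j ∉ F := fun hjF => by have := hlk j hjF; omega
    rw [hg] at hj3
    simp [hjF] at hj3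
  have : IsMeagre (⋃ m, E m) := isMeagre_iUnion fun m =>
    myNowhereDense_isMeagre (((hclosed m).isNowhereDense_iff).2 (hint m))
  exact this.mono hsub

def zset (d : ℕ → Set ℕ) (a j : ℕ) (s : ℕ → Bool) : Set ℕ :=
  {p | (p < a ∧ s p = true) ∨ (a ≤ p ∧ p ∈ d j)}

lemma zset_ext (d : ℕ → Set ℕ) (a j : ℕ) (s : ℕ → Bool) :
    zset d a j (fun q => if _ : q < a then s q else false) = zset d a j s := by
  ext p
  simp only [zset, mem_setOf_eq]
  constructor
  · rintro (⟨h1, h2⟩ | h)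
    · rw [dif_pos h1] at h2; exact Or.inl ⟨h1, h2⟩
    · exact Or.inr h
  · rintro (⟨h1, h2⟩ | h)
    · exact Or.inl ⟨h1, by rw [dif_pos h1]; exact h2⟩
    · exact Or.inr h

lemma zset_mem {I : Set (Set ℕ)} (hI : IsIdealOn I) (hfin : ContainsFinites I)
    {d : ℕ → Set ℕ} {j : ℕ} (hdj : d j ∈ I) (a : ℕ) (s : ℕ → Bool) :
    zset d a j s ∈ I := by
  apply hI.2.2.2 ((Set.Iio a) ∪ d j) _ (hI.2.2.1 _ _ (hfin _ (finite_Iio a)) hdj)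
  rintro p (⟨h1, _⟩ | ⟨_, h2⟩)
  · exact Or.inl h1
  · exact Or.inr h2

theorem stmt5 (I : Set (Set ℕ)) (hI : IsIdealOn I) (hfin : ContainsFinites I)
    (hP : IsPIdealOn I) (hNM : NonMeagerFamily I)
    (D : Fin 2 → Set (Set ℕ)) (hc : ∀ i, (D i).Countable)
    (hd : ∀ i, DenseIn (D i) I) :
    ∃ x ∈ I,
      (∀ i : Fin 2, ∀ d ∈ D i, (d \ x).Finite) ∧
      (∀ i : Fin 2, ∀ d ∈ D i, ∀ n : ℕ, ∀ t : ℕ → Bool,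
        ∃ e ∈ D (1 - i), d \ x = e \ x ∧
          ∀ k < n, k ∈ x → (k ∈ e ↔ t k = true)) := by
  classical
  -- enumerate the pairs (i, d) with d ∈ D i
  set P : Set (Fin 2 × Set ℕ) := {p | p.2 ∈ D p.1} with hPdef
  have hPc : P.Countable := by
    have hPeq : P = ⋃ i : Fin 2, (Prod.mk i) '' (D i) := by
      ext ⟨i', w⟩
      simp [hPdef]
    rw [hPeq]
    exact countable_iUnion fun i => ((hc i).image _)
  have hPne : P.Nonempty := by
    have h0 : (fun _ : ℕ => false) ∈ cantorCopy I := by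
      have h0' : toSet (fun _ : ℕ => false) = ∅ := by ext p; simp [toSet]
      simpa [cantorCopy, h0'] using hI.1
    have hcl := (hd 0).2 h0
    obtain ⟨g0, hg0⟩ := closure_nonempty_iff.1 ⟨_, hcl⟩
    exact ⟨(0, toSet g0), hg0⟩
  obtain ⟨g, hg⟩ := hPc.exists_eq_range hPne
  have hgD : ∀ j, (g j).2 ∈ D (g j).1 := by
    intro j
    have hm : g j ∈ P := by rw [hg]; exact ⟨j, rfl⟩
    exact hm
  have hgI : ∀ j, (g j).2 ∈ I := fun j => (hd _).1 (hgD j)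
  obtain ⟨y, hyI, hy⟩ := hP (fun j => (g j).2) hgI
  have hBex : ∀ j, ∃ N, ∀ p ∈ (g j).2 \ y, p < N := by
    intro j
    obtain ⟨b, hb⟩ := (hy j).bddAbove
    exact ⟨b + 1, fun p hp => Nat.lt_succ_of_le (hb hp)⟩
  choose B hB using hBex
  have hDfin : ∀ (i' : Fin 2) (w : Set ℕ), w ∈ D i' → (w \ y).Finite := by
    intro i' w hw
    have hm : (i', w) ∈ P := hw
    rw [hg] at hm
    obtain ⟨j, hj⟩ := hm
    have hw2 : (g j).2 = w := by rw [hj]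
    rw [← hw2]
    exact hy j
  have hB'ex : ∀ w : Set ℕ, ∃ N, (w \ y).Finite → ∀ p ∈ w \ y, p < N := by
    intro w
    by_cases h : (w \ y).Finite
    · obtain ⟨b, hb⟩ := h.bddAbove
      exact ⟨b + 1, fun _ p hp => Nat.lt_succ_of_le (hb hp)⟩
    · exact ⟨0, fun h' => absurd h' h⟩
  choose B' hB' using hB'ex
  have hEex : ∀ (i' : Fin 2) (w : Set ℕ) (m : ℕ), ∃ e : Set ℕ,
      w ∈ I → e ∈ D i' ∧ ∀ p < m, (p ∈ e ↔ p ∈ w) := by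
    intro i' w m
    by_cases h : w ∈ I
    · obtain ⟨e, he1, he2⟩ := dense_approx (hd i') h m
      exact ⟨e, fun _ => ⟨he1, he2⟩⟩
    · exact ⟨∅, fun h' => absurd h' h⟩
  choose Eapp hEapp using hEex
  -- bound for all possible approximating sets at a given stage
  obtain ⟨bigN, hbigN⟩ : ∃ bigN : ℕ → ℕ → ℕ → ℕ, ∀ a M k j (s : ℕ → Bool), j ≤ k →
      ∀ p ∈ Eapp (1 - (g j).1) (zset (fun j' => (g j').2) a j s) M \ y, p < bigN a M k := by
    refine ⟨fun a M k => (Finset.univ.sup fun q : Fin (k + 1) × (Fin a → Bool) =>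
      B' (Eapp (1 - (g (q.1 : ℕ)).1) (zset (fun j' => (g j').2) a (q.1 : ℕ)
        (fun p => if h : p < a then q.2 ⟨p, h⟩ else false)) M)) + 1, ?_⟩
    intro a M k j s hjk p hp
    show p < (Finset.univ.sup fun q : Fin (k + 1) × (Fin a → Bool) =>
      B' (Eapp (1 - (g (q.1 : ℕ)).1) (zset (fun j' => (g j').2) a (q.1 : ℕ)
        (fun p => if h : p < a then q.2 ⟨p, h⟩ else false)) M)) + 1
    have hmem := Finset.le_sup (f := fun q : Fin (k + 1) × (Fin a → Bool) =>
      B' (Eapp (1 - (g (q.1 : ℕ)).1) (zset (fun j' => (g j').2) a (q.1 : ℕ)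
        (fun p => if h : p < a then q.2 ⟨p, h⟩ else false)) M))
      (Finset.mem_univ (⟨j, Nat.lt_succ_of_le hjk⟩, fun r : Fin a => s r))
    have hFeq : (fun q : Fin (k + 1) × (Fin a → Bool) =>
        B' (Eapp (1 - (g (q.1 : ℕ)).1) (zset (fun j' => (g j').2) a (q.1 : ℕ)
          (fun p => if h : p < a then q.2 ⟨p, h⟩ else false)) M))
        (⟨j, Nat.lt_succ_of_le hjk⟩, fun r : Fin a => s r)
        = B' (Eapp (1 - (g j).1) (zset (fun j' => (g j').2) a j s) M) :=
      congrArg (fun w => B' (Eapp (1 - (g j).1) w M)) (zset_ext (fun j' => (g j').2) a j s)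
    replace hmem := hFeq.symm.trans_le hmem
    have hzI : zset (fun j' => (g j').2) a j s ∈ I := zset_mem hI hfin (hgI j) a s
    have hfin' : (Eapp (1 - (g j).1) (zset (fun j' => (g j').2) a j s) M \ y).Finite :=
      hDfin _ _ (hEapp _ _ M hzI).1
    have hlt := hB' _ hfin' p hp
    omega
  obtain ⟨Mf, hMf1, hMf2⟩ : ∃ Mf : ℕ → ℕ → ℕ, (∀ a k, a < Mf a k) ∧
      ∀ a k j, j ≤ k → B j ≤ Mf a k := by
    refine ⟨fun a k => max (a + 1) ((Finset.range (k + 1)).sup B), fun a k => ?_,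
      fun a k j hj => ?_⟩
    · exact lt_of_lt_of_le (Nat.lt_succ_self a) (le_max_left _ _)
    · exact le_trans (Finset.le_sup (Finset.mem_range.2 (Nat.lt_succ_of_le hj)))
        (le_max_right _ _)
  obtain ⟨nf, hnf1, hnf2⟩ : ∃ nf : ℕ → ℕ, (∀ k, Mf (nf k) k < nf (k + 1)) ∧
      ∀ k, bigN (nf k) (Mf (nf k) k) k ≤ nf (k + 1) := by
    refine ⟨fun k => Nat.rec 0 (fun k nk => max (Mf nk k + 1) (bigN nk (Mf nk k) k)) k,
      fun k => ?_, fun k => ?_⟩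
    · exact lt_of_lt_of_le (Nat.lt_succ_self _) (le_max_left _ _)
    · exact le_max_right _ _
  have hnfmono : StrictMono nf := strictMono_nat_of_lt_succ fun k =>
    lt_trans (hMf1 (nf k) k) (hnf1 k)
  obtain ⟨x₀, hx₀I, hhit⟩ := nonmeager_hits hNM (fun k => Mf (nf k) k) (fun k => nf (k + 1))
    hnf1 (fun k => le_of_lt (hMf1 (nf (k + 1)) (k + 1)))
  refine ⟨x₀ ∪ y, hI.2.2.1 _ _ hx₀I hyI, ?_, ?_⟩
  · intro i' d' hd'
    exact (hDfin i' d' hd').subset (fun p hp => ⟨hp.1, fun hpy => hp.2 (Or.inr hpy)⟩)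
  · intro i₀ d₀ hd₀ n₀ t
    have hm : (i₀, d₀) ∈ P := hd₀
    rw [hg] at hm
    obtain ⟨j, hj⟩ := hm
    have hij : (g j).1 = i₀ := by rw [hj]
    have hdj : (g j).2 = d₀ := by rw [hj]
    obtain ⟨k, hk, hhitk⟩ := hhit (max j n₀)
    have hjk : j ≤ k := le_trans (le_max_left j n₀) hk
    set s : ℕ → Bool := fun p => if p < n₀ ∧ p ∈ x₀ ∪ y then t p else decide (p ∈ d₀)
      with hs_def
    have hzI : zset (fun j' => (g j').2) (nf k) j s ∈ I := zset_mem hI hfin (hgI j) (nf k) s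
    have hEa := hEapp (1 - (g j).1) (zset (fun j' => (g j').2) (nf k) j s) (Mf (nf k) k) hzI
    have haM : nf k < Mf (nf k) k := hMf1 (nf k) k
    have hMn : Mf (nf k) k < nf (k + 1) := hnf1 k
    have hn₀a : n₀ ≤ nf k := le_trans (le_trans (le_max_right j n₀) hk) hnfmono.le_apply
    refine ⟨Eapp (1 - (g j).1) (zset (fun j' => (g j').2) (nf k) j s) (Mf (nf k) k),
      ?_, ?_, ?_⟩
    · rw [← hij]
      exact hEa.1
    · ext p
      by_cases hpx : p ∈ x₀ ∪ y
      · simp [hpx]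
      · simp only [mem_diff, hpx, not_false_iff, and_true]
        rcases lt_or_ge p (nf k) with hpa | hpa
        · have h1 := hEa.2 p (lt_trans hpa haM)
          have h2 : p ∈ zset (fun j' => (g j').2) (nf k) j s ↔ s p = true := by
            simp only [zset, mem_setOf_eq]
            constructor
            · rintro (⟨_, h⟩ | ⟨h, _⟩)
              · exact h
              · omega
            · intro h; exact Or.inl ⟨hpa, h⟩
          have h3 : s p = decide (p ∈ d₀) := by
            rw [hs_def]
            simp only
            rw [if_neg]
            rintro ⟨_, h⟩
            exact hpx h
          rw [h1, h2, h3]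
          simp
        · rcases lt_or_ge p (Mf (nf k) k) with hpM | hpM
          · have h1 := hEa.2 p hpM
            have h2 : p ∈ zset (fun j' => (g j').2) (nf k) j s ↔ p ∈ (g j).2 := by
              simp only [zset, mem_setOf_eq]
              constructor
              · rintro (⟨h, _⟩ | ⟨_, h⟩)
                · omega
                · exact h
              · intro h; exact Or.inr ⟨hpa, h⟩
            rw [h1, h2, hdj]
          · rcases lt_or_ge p (nf (k + 1)) with hpn | hpn
            · exact absurd (Or.inl (hhitk (mem_Ico.2 ⟨hpM, hpn⟩))) hpx
            · have hpy : p ∉ y := fun h => hpx (Or.inr h)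
              refine iff_of_false ?_ ?_
              · intro hpd
                have hmem : p ∈ (g j).2 \ y := ⟨by rw [hdj]; exact hpd, hpy⟩
                have hlt := hB j p hmem
                have hBM : B j ≤ Mf (nf k) k := hMf2 (nf k) k j hjk
                omega
              · intro hpe
                have hlt := hbigN (nf k) (Mf (nf k) k) k j s hjk p ⟨hpe, hpy⟩
                have hle := hnf2 k
                omega
    · intro q hq hqx
      have hqa : q < nf k := lt_of_lt_of_le hq hn₀a
      have h1 := hEa.2 q (lt_trans hqa haM)
      have h2 : q ∈ zset (fun j' => (g j').2) (nf k) j s ↔ s q = true := by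
        simp only [zset, mem_setOf_eq]
        constructor
        · rintro (⟨_, h⟩ | ⟨h, _⟩)
          · exact h
          · omega
        · intro h; exact Or.inl ⟨hqa, h⟩
      have h3 : s q = t q := by
        rw [hs_def]
        simp only
        rw [if_pos ⟨hq, hqx⟩]
      rw [h1, h2, h3]
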